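/- For all m, n ≥ 0, the number of compositions of the complete bipartite graph satisfies C(K_{m,n}) = Σ_{i=1}^{m+1} a_{m,i} · i^n, where a_{m,i} = Σ_{k=1}^{m+1} (−1)^{k−i} · C(k−1, i−1) · S(m+1, k), with C(·,·) binomial coefficients and S(·,·) Stirling numbers of the second kind. -/

import Mathlib

/-- `compCount G` is the number of compositions of the finite simple graph `G`, i.e. the
number of partitions of its vertex set into nonempty blocks each of which induces a
connected subgraph of `G`. -/
noncomputable def compCount {V : Type*} [Fintype V] [DecidableEq V] (G : SimpleGraph V) : ℕ :=
  Nat.card {P : Finpartition (Finset.univ : Finset V) //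
    ∀ B ∈ P.parts, (G.induce (↑B : Set V)).Connected}

/-- `stirling n k` is the Stirling number of the second kind `S(n,k)`: the number of
partitions of an `n`-element set into exactly `k` nonempty blocks. -/
noncomputable def stirling (n k : ℕ) : ℕ :=
  Nat.card {P : Finpartition (Finset.univ : Finset (Fin n)) // P.parts.card = k}

open Finset Sum

noncomputable def tcount (n k : ℕ) : ℕ :=
  Nat.card {g : Fin n → Fin k // ∀ j : Fin k, (j : ℕ) ≠ 0 → ∃ v, g v = j}

lemma orth (j b : ℕ) (hbj : b ≤ j) :
    ∑ i ∈ range (j+1), (-1:ℤ)^(j-i) * (j.choose i) * (i.choose b)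
      = if b = j then 1 else 0 := by
  have h1 : ∀ i ∈ range (j+1), i ∉ Ico b (j+1) →
      (-1:ℤ)^(j-i) * (j.choose i) * (i.choose b) = 0 := by
    intro i hi hni
    rw [mem_range] at hi
    rw [mem_Ico] at hni
    have : i < b := by omega
    simp [Nat.choose_eq_zero_of_lt this]
  rw [← Finset.sum_subset (by intro i hi; rw [mem_Ico] at hi; rw [mem_range]; omega) h1]
  rw [Finset.sum_Ico_eq_sum_range]
  have h2 : ∀ t ∈ range (j + 1 - b),
      (-1:ℤ)^(j-(b+t)) * (j.choose (b+t)) * ((b+t).choose b)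
        = (j.choose b) * ((-1:ℤ)^(j-b) * (-1:ℤ)^t * ((j-b).choose t)) := by
    intro t ht
    rw [mem_range] at ht
    have hbt : b + t ≤ j := by omega
    have : (j.choose (b+t)) * ((b+t).choose b) = (j.choose b) * ((j-b).choose (b+t-b)) :=
      Nat.choose_mul (n := j) (Nat.le_add_right _ _)
    have e1 : (b + t - b) = t := by omega
    rw [e1] at this
    have e2 : (-1:ℤ)^(j-(b+t)) = (-1:ℤ)^(j-b) * (-1:ℤ)^t := by
      have : j - b = (j - (b+t)) + t := by omega
      rw [this, pow_add, mul_assoc, ← pow_add, ← two_mul]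
      simp [pow_mul]
    have thisZ : ((j.choose (b+t)) : ℤ) * ((b+t).choose b) = (j.choose b) * ((j-b).choose t) := by
      exact_mod_cast congrArg (Nat.cast : ℕ → ℤ) this
    rw [e2]
    linear_combination ((-1:ℤ)^(j-b) * (-1:ℤ)^t) * thisZ
  rw [Finset.sum_congr rfl h2, ← Finset.mul_sum]
  have e3 : j + 1 - b = (j - b) + 1 := by omega
  rw [e3]
  have : ∑ t ∈ range ((j-b)+1), (-1:ℤ)^(j-b) * (-1:ℤ)^t * ((j-b).choose t)
      = (-1:ℤ)^(j-b) * ∑ t ∈ range ((j-b)+1), (-1:ℤ)^t * ((j-b).choose t) := by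
    rw [Finset.mul_sum]; exact Finset.sum_congr rfl (by intros; ring)
  rw [this, Int.alternating_sum_range_choose]
  rcases eq_or_ne b j with rfl | hne
  · simp
  · have : j - b ≠ 0 := by omega
    simp [this, hne]


noncomputable def fiberEquiv (n a : ℕ) (S : Finset (Fin (a+1))) (h0 : (0 : Fin (a+1)) ∉ S) :
    {f : Fin n → Fin (a+1) // univ.filter (fun j : Fin (a+1) => j.val ≠ 0 ∧ ∃ v, f v = j) = S}
      ≃ {g : Fin n → Fin (S.card+1) // ∀ j : Fin (S.card+1), (j : ℕ) ≠ 0 → ∃ v, g v = j} where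
  toFun f := ⟨fun v => if h : f.1 v ∈ S then (S.equivFin ⟨f.1 v, h⟩).succ else 0, by
    intro j hj
    rcases Fin.eq_zero_or_eq_succ j with rfl | ⟨i, rfl⟩
    · simp at hj
    · set x := S.equivFin.symm i with hx
      have hxS : (x : Fin (a+1)) ∈ S := x.2
      have hmem : (x : Fin (a+1)) ∈ univ.filter
          (fun j : Fin (a+1) => j.val ≠ 0 ∧ ∃ v, f.1 v = j) := by
        rw [f.2]; exact hxS
      rw [mem_filter] at hmem
      obtain ⟨-, -, v, hv⟩ := hmem
      refine ⟨v, ?_⟩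
      have hm : f.1 v ∈ S := by rw [hv]; exact hxS
      dsimp only
      rw [dif_pos hm]
      congr 1
      have : (⟨f.1 v, hm⟩ : {y // y ∈ S}) = x := Subtype.ext hv
      rw [this, hx, Equiv.apply_symm_apply]⟩
  invFun g := ⟨fun v => Fin.cases 0 (fun i => (S.equivFin.symm i : Fin (a+1))) (g.1 v), by
    ext j
    simp only [mem_filter, mem_univ, true_and]
    constructor
    · rintro ⟨hj0, v, hv⟩
      rcases Fin.eq_zero_or_eq_succ (g.1 v) with hgv | ⟨i, hgv⟩
      · rw [hgv] at hv; simp only [Fin.cases_zero] at hv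
        exact absurd (congrArg Fin.val hv.symm) (by simpa using hj0)
      · rw [hgv] at hv; simp only [Fin.cases_succ] at hv
        rw [← hv]; exact (S.equivFin.symm i).2
    · intro hjS
      refine ⟨fun h => h0 (by rwa [show j = 0 from Fin.ext h] at hjS), ?_⟩
      obtain ⟨v, hv⟩ := g.2 (S.equivFin ⟨j, hjS⟩).succ (by simp)
      refine ⟨v, ?_⟩
      rw [hv]
      simp⟩
  left_inv f := by
    apply Subtype.ext
    funext v
    dsimp only
    by_cases h : f.1 v ∈ S
    · rw [dif_pos h]
      simp
    · rw [dif_neg h]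
      simp only [Fin.cases_zero]
      by_contra hne
      have : f.1 v ∈ univ.filter (fun j : Fin (a+1) => j.val ≠ 0 ∧ ∃ v', f.1 v' = j) := by
        simp only [mem_filter, mem_univ, true_and]
        exact ⟨fun hc => hne (Fin.ext (by simpa using hc.symm)), v, rfl⟩
      rw [f.2] at this
      exact h this
  right_inv g := by
    apply Subtype.ext
    funext v
    dsimp only
    rcases Fin.eq_zero_or_eq_succ (g.1 v) with hgv | ⟨i, hgv⟩
    · simp only [hgv, Fin.cases_zero]
      rw [dif_neg h0]
    · simp only [hgv, Fin.cases_succ]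
      rw [dif_pos (S.equivFin.symm i).2]
      have : (⟨(S.equivFin.symm i : Fin (a+1)), (S.equivFin.symm i).2⟩ : {y // y ∈ S})
          = S.equivFin.symm i := Subtype.ext rfl
      rw [this, Equiv.apply_symm_apply]

lemma L1 (n a : ℕ) :
    (a+1)^n = ∑ b ∈ range (a+1), a.choose b * tcount n (b+1) := by
  classical
  have base : (a+1)^n = Fintype.card (Fin n → Fin (a+1)) := by simp [Fintype.card_fun]
  set R : (Fin n → Fin (a+1)) → Finset (Fin (a+1)) :=
    fun f => univ.filter (fun j : Fin (a+1) => j.val ≠ 0 ∧ ∃ v, f v = j) with hR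
  have e1 : Fintype.card (Fin n → Fin (a+1))
      = ∑ S : Finset (Fin (a+1)), Fintype.card {f // R f = S} := by
    rw [← Fintype.card_sigma]
    exact Fintype.card_congr (Equiv.sigmaFiberEquiv R).symm
  have hfib : ∀ S : Finset (Fin (a+1)), Fintype.card {f // R f = S}
      = if (0 : Fin (a+1)) ∈ S then 0 else tcount n (S.card + 1) := by
    intro S
    by_cases h0 : (0 : Fin (a+1)) ∈ S
    · rw [if_pos h0]
      rw [Fintype.card_eq_zero_iff]
      constructor
      rintro ⟨f, hf⟩
      have : (0 : Fin (a+1)) ∈ R f := hf ▸ h0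
      rw [hR, mem_filter] at this
      exact this.2.1 rfl
    · rw [if_neg h0, tcount, Nat.card_eq_fintype_card]
      exact Fintype.card_congr (fiberEquiv n a S h0)
  rw [base, e1, Finset.sum_congr rfl (fun S _ => hfib S)]
  have e2 : (∑ S : Finset (Fin (a+1)), if (0:Fin (a+1)) ∈ S then 0 else tcount n (S.card + 1))
      = ∑ S ∈ univ.filter (fun S : Finset (Fin (a+1)) => (0:Fin (a+1)) ∉ S),
          tcount n (S.card + 1) := by
    rw [Finset.sum_filter]
    exact Finset.sum_congr rfl (fun S _ => by by_cases h : (0:Fin (a+1)) ∈ S <;> simp [h])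
  have e3 : univ.filter (fun S : Finset (Fin (a+1)) => (0:Fin (a+1)) ∉ S)
      = ((univ : Finset (Fin (a+1))).erase 0).powerset := by
    ext S
    simp [Finset.mem_powerset, Finset.subset_erase]
  have e4 : (((univ : Finset (Fin (a+1))).erase 0)).card = a := by
    rw [card_erase_of_mem (mem_univ _), card_univ]
    simp
  rw [e2, e3, Finset.sum_powerset_apply_card (fun b => tcount n (b+1)), e4]
  exact Finset.sum_congr rfl (fun b _ => by simp [smul_eq_mul])

lemma L3 (n j : ℕ) :
    (tcount n (j+1) : ℤ)
      = ∑ i ∈ range (j+1), (-1:ℤ)^(j-i) * (j.choose i) * ((i:ℤ)+1)^n := by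
  have key : ∀ i : ℕ, ((i:ℤ)+1)^n = ∑ b ∈ range (i+1), (i.choose b : ℤ) * tcount n (b+1) := by
    intro i
    have := L1 n i
    have := congrArg (Nat.cast : ℕ → ℤ) this
    push_cast at this
    convert this using 2
  have ext1 : ∀ i ∈ range (j+1),
      (-1:ℤ)^(j-i) * (j.choose i) * ((i:ℤ)+1)^n
        = ∑ b ∈ range (j+1), (-1:ℤ)^(j-i) * (j.choose i) * ((i.choose b : ℤ) * tcount n (b+1)) := by
    intro i hi
    rw [mem_range] at hi
    rw [key i, Finset.mul_sum]
    apply Finset.sum_subset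
    · intro b hb; rw [mem_range] at hb ⊢; omega
    · intro b hb hnb
      rw [mem_range] at hb hnb
      have : i < b := by omega
      simp [Nat.choose_eq_zero_of_lt this]
  rw [Finset.sum_congr rfl ext1, Finset.sum_comm]
  have ext2 : ∀ b ∈ range (j+1),
      (∑ i ∈ range (j+1), (-1:ℤ)^(j-i) * (j.choose i) * ((i.choose b : ℤ) * tcount n (b+1)))
        = (if b = j then 1 else 0) * tcount n (b+1) := by
    intro b hb
    rw [mem_range] at hb
    rw [← orth j b (by omega), Finset.sum_mul]
    exact Finset.sum_congr rfl (fun i _ => by ring)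
  rw [Finset.sum_congr rfl ext2,
    Finset.sum_congr rfl (fun b _ => by
      show (if b = j then (1:ℤ) else 0) * tcount n (b+1)
        = if b = j then (tcount n (b+1) : ℤ) else 0
      split <;> simp)]
  rw [Finset.sum_ite_eq' (range (j+1)) j]
  simp

-- ker setoid of a function
def kerS {α β : Type*} (g : α → β) : Setoid α :=
  ⟨fun a b => g a = g b, ⟨fun _ => rfl, Eq.symm, Eq.trans⟩⟩

instance kerS.decRel {α β : Type*} [DecidableEq β] (g : α → β) : DecidableRel (kerS g).r :=
  fun a b => inferInstanceAs (Decidable (g a = g b))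

lemma part_kerS {α β : Type*} [Fintype α] [DecidableEq α] [DecidableEq β] (g : α → β) (a : α) :
    (Finpartition.ofSetoid (kerS g)).part a = univ.filter (fun b => g b = g a) := by
  ext b
  rw [Finpartition.mem_part_ofSetoid_iff_rel]
  simp only [mem_filter, mem_univ, true_and]
  exact ⟨Eq.symm, Eq.symm⟩

lemma mem_parts_iff_part {α : Type*} [Fintype α] [DecidableEq α]
    (P : Finpartition (univ : Finset α)) (C : Finset α) :
    C ∈ P.parts ↔ ∃ a, P.part a = C := by
  constructor
  · intro h
    obtain ⟨a, ha⟩ := P.nonempty_of_mem_parts h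
    exact ⟨a, P.part_eq_of_mem h ha⟩
  · rintro ⟨a, rfl⟩
    exact P.part_mem.2 (mem_univ a)

lemma finpartition_eq_of_part_eq {α : Type*} [Fintype α] [DecidableEq α]
    {P P' : Finpartition (univ : Finset α)} (h : ∀ a, P.part a = P'.part a) : P = P' := by
  apply Finpartition.ext
  ext C
  rw [mem_parts_iff_part, mem_parts_iff_part]
  exact exists_congr fun a => by rw [h a]

lemma part_eq_filter {α : Type*} [Fintype α] [DecidableEq α]
    (P : Finpartition (univ : Finset α)) (a : α) :
    P.part a = univ.filter (fun b => P.part b = P.part a) := by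
  ext b
  simp only [mem_filter, mem_univ, true_and]
  exact P.mem_part_iff_part_eq_part (mem_univ b) (mem_univ a)

section Maps
variable (m n : ℕ)

/-- a block is "mixed" if it has vertices on both sides -/
def mixedB (B : Finset (Fin m ⊕ Fin n)) : Prop := B.toLeft.Nonempty ∧ B.toRight.Nonempty

instance : DecidablePred (mixedB m n) := fun _ => instDecidableAnd

lemma mixedB_iff (B : Finset (Fin m ⊕ Fin n)) :
    mixedB m n B ↔ (∃ x, inl x ∈ B) ∧ (∃ y, inr y ∈ B) := by
  unfold mixedB
  rw [Finset.nonempty_iff_ne_empty, ← Finset.nonempty_iff_ne_empty]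
  constructor
  · rintro ⟨⟨x, hx⟩, ⟨y, hy⟩⟩
    exact ⟨⟨x, by simpa using hx⟩, ⟨y, by simpa using hy⟩⟩
  · rintro ⟨⟨x, hx⟩, ⟨y, hy⟩⟩
    exact ⟨⟨x, by simpa using hx⟩, ⟨y, by simpa using hy⟩⟩

variable {m n}

/-- label of columns: the mixed part of `P` through a left vertex, `∅` for the extra point
or non-mixed parts -/
def qlab (P : Finpartition (univ : Finset (Fin m ⊕ Fin n))) (w : Fin (m+1)) :
    Finset (Fin m ⊕ Fin n) :=
  Fin.lastCases ∅
    (fun x => if mixedB m n (P.part (inl x)) then P.part (inl x) else ∅) w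

@[simp] lemma qlab_last (P : Finpartition (univ : Finset (Fin m ⊕ Fin n))) :
    qlab P (Fin.last m) = ∅ := by
  simp [qlab]

@[simp] lemma qlab_castSucc (P : Finpartition (univ : Finset (Fin m ⊕ Fin n))) (x : Fin m) :
    qlab P x.castSucc
      = if mixedB m n (P.part (inl x)) then P.part (inl x) else ∅ := by
  simp [qlab]

/-- the `Fin (m+1)`-partition associated to a composition -/
def QF (P : Finpartition (univ : Finset (Fin m ⊕ Fin n))) :
    Finpartition (univ : Finset (Fin (m+1))) :=
  Finpartition.ofSetoid (kerS (qlab P))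

def vlab (P : Finpartition (univ : Finset (Fin m ⊕ Fin n))) (v : Fin n) :
    Finset (Fin m ⊕ Fin n) :=
  if mixedB m n (P.part (inr v)) then P.part (inr v) else ∅

/-- the map recording where right vertices go -/
def fF (P : Finpartition (univ : Finset (Fin m ⊕ Fin n))) (v : Fin n) : Finset (Fin (m+1)) :=
  univ.filter (fun w => qlab P w = vlab P v)

def glab (Q : Finpartition (univ : Finset (Fin (m+1)))) (f : Fin n → Finset (Fin (m+1))) :
    (Fin m ⊕ Fin n) → (Finset (Fin (m+1)) ⊕ (Fin m ⊕ Fin n)) :=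
  Sum.elim
    (fun x => if Fin.last m ∈ Q.part x.castSucc then .inr (inl x)
      else .inl (Q.part x.castSucc))
    (fun v => if Fin.last m ∈ f v then .inr (inr v) else .inl (f v))

/-- the composition associated to a pair `(Q, f)` -/
def PG (Q : Finpartition (univ : Finset (Fin (m+1)))) (f : Fin n → Finset (Fin (m+1))) :
    Finpartition (univ : Finset (Fin m ⊕ Fin n)) :=
  Finpartition.ofSetoid (kerS (glab Q f))

def valid (Q : Finpartition (univ : Finset (Fin (m+1)))) (f : Fin n → Finset (Fin (m+1))) :
    Prop :=
  (∀ v, f v ∈ Q.parts) ∧ ∀ C ∈ Q.parts, Fin.last m ∉ C → ∃ v, f v = C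

lemma glab_eq_inr {Q : Finpartition (univ : Finset (Fin (m+1)))}
    {f : Fin n → Finset (Fin (m+1))} {b u : Fin m ⊕ Fin n}
    (h : glab Q f b = .inr u) : b = u := by
  rcases b with x | v <;> simp only [glab, Sum.elim_inl, Sum.elim_inr] at h <;>
    split at h <;> simp_all

/-- parts of `PG` through an element with a "singleton" label -/
lemma PG_part_of_inr {Q : Finpartition (univ : Finset (Fin (m+1)))}
    {f : Fin n → Finset (Fin (m+1))} {u : Fin m ⊕ Fin n}
    (h : glab Q f u = .inr u) : (PG Q f).part u = {u} := by
  rw [PG, part_kerS]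
  ext b
  simp only [mem_filter, mem_univ, true_and, Finset.mem_singleton, h]
  constructor
  · exact fun hb => glab_eq_inr hb
  · rintro rfl; exact h

lemma glab_self {Q : Finpartition (univ : Finset (Fin (m+1)))}
    {f : Fin n → Finset (Fin (m+1))} (u : Fin m ⊕ Fin n) :
    (∃ C, glab Q f u = .inl C) ∨ glab Q f u = .inr u := by
  rcases u with x | v <;> simp only [glab, Sum.elim_inl, Sum.elim_inr] <;> split
  · right; rfl
  · left; exact ⟨_, rfl⟩
  · right; rfl
  · left; exact ⟨_, rfl⟩

/-- if `C` is a part of `Q` not containing the last point, there is a left vertex labeled by it -/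
lemma exists_inl_glab (Q : Finpartition (univ : Finset (Fin (m+1))))
    (f : Fin n → Finset (Fin (m+1))) {C : Finset (Fin (m+1))}
    (hC : C ∈ Q.parts) (hl : Fin.last m ∉ C) :
    ∃ x : Fin m, Q.part x.castSucc = C ∧ glab Q f (inl x) = .inl C := by
  obtain ⟨w, hw⟩ := Q.nonempty_of_mem_parts hC
  have hwl : w ≠ Fin.last m := fun h => hl (h ▸ hw)
  obtain ⟨x, hx⟩ := Fin.exists_castSucc_eq.mpr hwl
  have hpart : Q.part x.castSucc = C := by rw [hx]; exact Q.part_eq_of_mem hC hw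
  refine ⟨x, hpart, ?_⟩
  simp only [glab, Sum.elim_inl, hpart]
  rw [if_neg hl]

lemma mem_part_last_iff (Q : Finpartition (univ : Finset (Fin (m+1)))) (w : Fin (m+1)) :
    Fin.last m ∈ Q.part w ↔ Q.part (Fin.last m) = Q.part w :=
  Q.mem_part_iff_part_eq_part (mem_univ _) (mem_univ _)

end Maps

section Conn
variable {m n : ℕ}

lemma conn_singleton (G : SimpleGraph (Fin m ⊕ Fin n)) (a : Fin m ⊕ Fin n) :
    (G.induce ({a} : Set (Fin m ⊕ Fin n))).Connected := by
  rw [SimpleGraph.connected_iff]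
  refine ⟨fun u v => ?_, ⟨⟨a, rfl⟩⟩⟩
  have : u = v := Subtype.ext (by rw [u.2, v.2])
  rw [this]

lemma conn_of_mixed (B : Finset (Fin m ⊕ Fin n))
    (hx : ∃ x, Sum.inl x ∈ B) (hy : ∃ y, Sum.inr y ∈ B) :
    ((completeBipartiteGraph (Fin m) (Fin n)).induce
      (↑B : Set (Fin m ⊕ Fin n))).Connected := by
  obtain ⟨x, hx⟩ := hx
  obtain ⟨y, hy⟩ := hy
  rw [SimpleGraph.connected_iff]
  refine ⟨fun u v => ?_, ⟨⟨inl x, by simpa using hx⟩⟩⟩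
  have adj_lr : ∀ (x' : Fin m) (y' : Fin n) (hx' : inl x' ∈ B) (hy' : inr y' ∈ B),
      ((completeBipartiteGraph (Fin m) (Fin n)).induce (↑B : Set (Fin m ⊕ Fin n))).Adj
        ⟨inl x', by simpa using hx'⟩ ⟨inr y', by simpa using hy'⟩ := by
    intro x' y' hx' hy'
    exact Or.inl ⟨rfl, rfl⟩
  obtain ⟨u, hu⟩ := u
  obtain ⟨v, hv⟩ := v
  rcases u with xu | yu <;> rcases v with xv | yv
  · have hum : inl xu ∈ B := by simpa using hu
    have hvm : inl xv ∈ B := by simpa using hv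
    exact ((adj_lr xu y hum hy).reachable).trans ((adj_lr xv y hvm hy).symm.reachable)
  · exact (adj_lr xu yv (by simpa using hu) (by simpa using hv)).reachable
  · exact ((adj_lr xv yu (by simpa using hv) (by simpa using hu)).symm).reachable
  · have hum : inr yu ∈ B := by simpa using hu
    have hvm : inr yv ∈ B := by simpa using hv
    exact ((adj_lr x yu hx hum).symm.reachable).trans ((adj_lr x yv hx hvm).reachable)

lemma conn_iff (B : Finset (Fin m ⊕ Fin n)) (hB : B.Nonempty) :
    ((completeBipartiteGraph (Fin m) (Fin n)).induce (↑B : Set (Fin m ⊕ Fin n))).Connected ↔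
      ((∃ a, B = {a}) ∨ ((∃ x, Sum.inl x ∈ B) ∧ ∃ y, Sum.inr y ∈ B)) := by
  constructor
  · intro hc
    by_contra hcon
    push_neg at hcon
    obtain ⟨hns, hnm⟩ := hcon
    have h2 : 1 < B.card := by
      have hc1 : B.card ≠ 1 := fun h => (hns _ (Finset.card_eq_one.mp h).choose_spec).elim
      have hc0 : B.card ≠ 0 := by
        simpa [Finset.card_eq_zero] using hB.ne_empty
      omega
    obtain ⟨u, hu, v, hv, huv⟩ := Finset.one_lt_card.mp h2
    -- the induced graph is ⊥
    have hbot : ((completeBipartiteGraph (Fin m) (Fin n)).induce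
        (↑B : Set (Fin m ⊕ Fin n))) = ⊥ := by
      ext a b
      simp only [SimpleGraph.comap_adj, completeBipartiteGraph_adj, SimpleGraph.bot_adj,
        iff_false]
      rintro (⟨h1, h2⟩ | ⟨h1, h2⟩)
      · obtain ⟨xa, hxa⟩ := Sum.isLeft_iff.mp (by exact h1)
        obtain ⟨yb, hyb⟩ := Sum.isRight_iff.mp (by exact h2)
        have hxaB : inl xa ∈ B := by
          have hxa' : (↑a : Fin m ⊕ Fin n) = inl xa := hxa
          have := a.2; rw [hxa'] at this; simpa using this
        have hybB : inr yb ∈ B := by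
          have hyb' : (↑b : Fin m ⊕ Fin n) = inr yb := hyb
          have := b.2; rw [hyb'] at this; simpa using this
        exact hnm ⟨xa, hxaB⟩ yb hybB
      · obtain ⟨xb, hxb⟩ := Sum.isLeft_iff.mp (by exact h2)
        obtain ⟨ya, hya⟩ := Sum.isRight_iff.mp (by exact h1)
        have hxbB : inl xb ∈ B := by
          have hxb' : (↑b : Fin m ⊕ Fin n) = inl xb := hxb
          have := b.2; rw [hxb'] at this; simpa using this
        have hyaB : inr ya ∈ B := by
          have hya' : (↑a : Fin m ⊕ Fin n) = inr ya := hya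
          have := a.2; rw [hya'] at this; simpa using this
        exact hnm ⟨xb, hxbB⟩ ya hyaB
    rw [hbot] at hc
    have := SimpleGraph.reachable_bot.mp
      (hc.preconnected ⟨u, by simpa using hu⟩ ⟨v, by simpa using hv⟩)
    exact huv (by simpa using congrArg Subtype.val this)
  · rintro (⟨a, rfl⟩ | ⟨hx, hy⟩)
    · have hset : (↑({a} : Finset (Fin m ⊕ Fin n)) : Set _) = ({a} : Set _) :=
        Finset.coe_singleton a
      rw [hset]
      exact conn_singleton _ a
    · exact conn_of_mixed B hx hy

end Conn

section Valid
variable {m n : ℕ}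

lemma fF_mem_parts (P : Finpartition (univ : Finset (Fin m ⊕ Fin n))) (v : Fin n) :
    fF P v ∈ (QF P).parts := by
  by_cases hmix : mixedB m n (P.part (inr v))
  · obtain ⟨x, hx⟩ := hmix.1
    rw [Finset.mem_toLeft] at hx
    have hpx : P.part (inl x) = P.part (inr v) :=
      P.part_eq_of_mem (P.part_mem.2 (mem_univ _)) hx
    have : fF P v = (QF P).part x.castSucc := by
      rw [QF, part_kerS]
      apply Finset.filter_congr
      intro w _
      rw [qlab_castSucc, hpx, if_pos hmix, vlab, if_pos hmix]
    rw [this]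
    exact (QF P).part_mem.2 (mem_univ _)
  · have : fF P v = (QF P).part (Fin.last m) := by
      rw [QF, part_kerS]
      apply Finset.filter_congr
      intro w _
      rw [qlab_last, vlab, if_neg hmix]
    rw [this]
    exact (QF P).part_mem.2 (mem_univ _)

lemma QF_part_eq (P : Finpartition (univ : Finset (Fin m ⊕ Fin n))) (w : Fin (m+1)) :
    (QF P).part w = univ.filter (fun w' => qlab P w' = qlab P w) :=
  part_kerS _ _

lemma fF_surj (P : Finpartition (univ : Finset (Fin m ⊕ Fin n)))
    {C : Finset (Fin (m+1))} (hC : C ∈ (QF P).parts) (hl : Fin.last m ∉ C) :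
    ∃ v, fF P v = C := by
  obtain ⟨w, hw⟩ := (mem_parts_iff_part _ _).mp hC
  have hlast : Fin.last m ∈ (QF P).part w ↔ qlab P w = ∅ := by
    rw [QF_part_eq]
    simp only [mem_filter, mem_univ, true_and, qlab_last]
    exact ⟨fun h => h.symm, fun h => h.symm⟩
  rw [hw] at hlast
  have hne : qlab P w ≠ ∅ := fun h => hl (hlast.mpr h)
  have hwl : w ≠ Fin.last m := fun h => hne (h ▸ qlab_last P)
  obtain ⟨x, rfl⟩ := Fin.exists_castSucc_eq.mpr hwl
  rw [qlab_castSucc] at hne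
  have hmix : mixedB m n (P.part (inl x)) := by
    by_contra h
    rw [if_neg h] at hne
    exact hne rfl
  obtain ⟨y, hy⟩ := hmix.2
  rw [Finset.mem_toRight] at hy
  have hpy : P.part (inr y) = P.part (inl x) :=
    P.part_eq_of_mem (P.part_mem.2 (mem_univ _)) hy
  refine ⟨y, ?_⟩
  rw [← hw, QF_part_eq, fF]
  apply Finset.filter_congr
  intro w' _
  rw [vlab, hpy, if_pos hmix, qlab_castSucc, if_pos hmix]

lemma valid_QF_fF (P : Finpartition (univ : Finset (Fin m ⊕ Fin n))) :
    valid (QF P) (fF P) :=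
  ⟨fF_mem_parts P, fun _ hC hl => fF_surj P hC hl⟩

/-- the fiber of a non-last part label is mixed -/
lemma fiber_inl_mixed {Q : Finpartition (univ : Finset (Fin (m+1)))}
    {f : Fin n → Finset (Fin (m+1))} (hv : valid Q f) {C : Finset (Fin (m+1))}
    (hC : C ∈ Q.parts) (hl : Fin.last m ∉ C) :
    (∃ x, glab Q f (inl x) = .inl C) ∧ (∃ y, glab (n := n) Q f (inr y) = .inl C) := by
  obtain ⟨x, -, hx⟩ := exists_inl_glab Q f hC hl
  obtain ⟨y, hy⟩ := hv.2 C hC hl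
  refine ⟨⟨x, hx⟩, ⟨y, ?_⟩⟩
  simp only [glab, Sum.elim_inr, hy]
  rw [if_neg hl]

lemma PG_part_eq (Q : Finpartition (univ : Finset (Fin (m+1))))
    (f : Fin n → Finset (Fin (m+1))) (u : Fin m ⊕ Fin n) :
    (PG Q f).part u = univ.filter (fun b => glab Q f b = glab Q f u) :=
  part_kerS _ _

lemma PG_parts_conn {Q : Finpartition (univ : Finset (Fin (m+1)))}
    {f : Fin n → Finset (Fin (m+1))} (hv : valid Q f) :
    ∀ B ∈ (PG Q f).parts,
      ((completeBipartiteGraph (Fin m) (Fin n)).induce (↑B : Set (Fin m ⊕ Fin n))).Connected := by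
  intro B hB
  obtain ⟨u, hu⟩ := (mem_parts_iff_part _ _).mp hB
  rcases glab_self (Q := Q) (f := f) u with ⟨C, hC⟩ | hsing
  · -- mixed part
    subst hu
    -- C is a part of Q not containing last
    have hCparts : C ∈ Q.parts ∧ Fin.last m ∉ C := by
      rcases u with x | v <;> simp only [glab, Sum.elim_inl, Sum.elim_inr] at hC
      · split at hC
        · exact absurd hC (by simp)
        · obtain rfl : Q.part x.castSucc = C := by injection hC
          exact ⟨Q.part_mem.2 (mem_univ _), by assumption⟩
      · split at hC
        · exact absurd hC (by simp)
        · obtain rfl : f v = C := by injection hC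
          exact ⟨hv.1 v, by assumption⟩
    obtain ⟨hx, hy⟩ := fiber_inl_mixed hv hCparts.1 hCparts.2
    apply conn_of_mixed
    · obtain ⟨x, hx⟩ := hx
      exact ⟨x, by rw [PG_part_eq]; simp [hx, hC]⟩
    · obtain ⟨y, hy⟩ := hy
      exact ⟨y, by rw [PG_part_eq]; simp [hy, hC]⟩
  · rw [PG_part_of_inr hsing] at hu
    subst hu
    have hset : (↑({u} : Finset (Fin m ⊕ Fin n)) : Set _) = ({u} : Set _) :=
      Finset.coe_singleton u
    rw [hset]
    exact conn_singleton _ u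

section RoundTrip1
variable {m n : ℕ}

lemma glab_QF_fF (P : Finpartition (univ : Finset (Fin m ⊕ Fin n))) (u : Fin m ⊕ Fin n) :
    glab (QF P) (fF P) u
      = if mixedB m n (P.part u) then
          .inl (univ.filter (fun w => qlab P w = P.part u))
        else .inr u := by
  rcases u with x | v
  · have hlastmem : Fin.last m ∈ (QF P).part x.castSucc ↔ qlab P x.castSucc = ∅ := by
      rw [QF_part_eq]
      simp only [mem_filter, mem_univ, true_and, qlab_last]
      exact ⟨fun h => h.symm, fun h => h.symm⟩
    by_cases hmix : mixedB m n (P.part (inl x))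
    · have hne : qlab P x.castSucc ≠ ∅ := by
        rw [qlab_castSucc, if_pos hmix]
        exact Finset.nonempty_iff_ne_empty.mp ⟨inl x, P.mem_part (mem_univ _)⟩
      have hnl : Fin.last m ∉ (QF P).part x.castSucc := fun h => hne (hlastmem.mp h)
      simp only [glab, Sum.elim_inl]
      rw [if_neg hnl, if_pos hmix, QF_part_eq]
      congr 1
      apply Finset.filter_congr
      intro w _
      rw [qlab_castSucc, if_pos hmix]
    · have he : qlab P x.castSucc = ∅ := by rw [qlab_castSucc, if_neg hmix]
      simp only [glab, Sum.elim_inl]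
      rw [if_pos (hlastmem.mpr he), if_neg hmix]
  · have hlastmem : Fin.last m ∈ fF P v ↔ vlab P v = ∅ := by
      rw [fF]
      simp only [mem_filter, mem_univ, true_and, qlab_last]
      exact ⟨fun h => h.symm, fun h => h.symm⟩
    by_cases hmix : mixedB m n (P.part (inr v))
    · have hne : vlab P v ≠ ∅ := by
        rw [vlab, if_pos hmix]
        exact Finset.nonempty_iff_ne_empty.mp ⟨inr v, P.mem_part (mem_univ _)⟩
      simp only [glab, Sum.elim_inr]
      rw [if_neg (fun h => hne (hlastmem.mp h)), if_pos hmix, fF]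
      congr 1
      apply Finset.filter_congr
      intro w _
      rw [vlab, if_pos hmix]
    · have he : vlab P v = ∅ := by rw [vlab, if_neg hmix]
      simp only [glab, Sum.elim_inr]
      rw [if_pos (hlastmem.mpr he), if_neg hmix]

lemma nonmixed_singleton {P : Finpartition (univ : Finset (Fin m ⊕ Fin n))}
    (hconn : ∀ B ∈ P.parts,
      ((completeBipartiteGraph (Fin m) (Fin n)).induce (↑B : Set (Fin m ⊕ Fin n))).Connected)
    {u b : Fin m ⊕ Fin n} (h : P.part b = P.part u)
    (hnm : ¬ mixedB m n (P.part u)) : b = u := by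
  have hBmem : P.part u ∈ P.parts := P.part_mem.2 (mem_univ _)
  have hBne : (P.part u).Nonempty := ⟨u, P.mem_part (mem_univ _)⟩
  rcases (conn_iff _ hBne).mp (hconn _ hBmem) with ⟨a, ha⟩ | hm
  · have hb : b ∈ P.part u := h ▸ P.mem_part (mem_univ _)
    have hu : u ∈ P.part u := P.mem_part (mem_univ _)
    rw [ha, Finset.mem_singleton] at hb hu
    rw [hb, hu]
  · exact absurd ((mixedB_iff m n _).mpr hm) hnm

lemma PG_QF_fF {P : Finpartition (univ : Finset (Fin m ⊕ Fin n))}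
    (hconn : ∀ B ∈ P.parts,
      ((completeBipartiteGraph (Fin m) (Fin n)).induce (↑B : Set (Fin m ⊕ Fin n))).Connected) :
    PG (QF P) (fF P) = P := by
  apply finpartition_eq_of_part_eq
  intro u
  rw [PG_part_eq, part_eq_filter P u]
  apply Finset.filter_congr
  intro b _
  rw [glab_QF_fF, glab_QF_fF]
  constructor
  · intro h
    by_cases hmb : mixedB m n (P.part b) <;> by_cases hmu : mixedB m n (P.part u)
    · rw [if_pos hmb, if_pos hmu] at h
      have hfil := Sum.inl.inj h
      obtain ⟨x, hx⟩ := ((mixedB_iff m n _).mp hmb).1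
      have hpx : P.part (inl x) = P.part b := P.part_eq_of_mem (P.part_mem.2 (mem_univ _)) hx
      have hxin : x.castSucc ∈ univ.filter (fun w => qlab P w = P.part b) := by
        simp only [mem_filter, mem_univ, true_and, qlab_castSucc, hpx]
        rw [if_pos hmb]
      rw [hfil] at hxin
      simp only [mem_filter, mem_univ, true_and, qlab_castSucc, hpx] at hxin
      rw [if_pos hmb] at hxin
      exact hxin
    · rw [if_pos hmb, if_neg hmu] at h; exact absurd h (by simp)
    · rw [if_neg hmb, if_pos hmu] at h; exact absurd h (by simp)
    · rw [if_neg hmb, if_neg hmu] at h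
      rw [Sum.inr.inj h]
  · intro h
    rw [h]
    by_cases hmu : mixedB m n (P.part u)
    · rw [if_pos hmu, if_pos hmu]
    · rw [if_neg hmu, if_neg hmu, nonmixed_singleton hconn h hmu]

end RoundTrip1

section RoundTrip2
variable {m n : ℕ}

lemma fiber_inl_nonempty {Q : Finpartition (univ : Finset (Fin (m+1)))}
    {f : Fin n → Finset (Fin (m+1))} {C : Finset (Fin (m+1))}
    (hC : C ∈ Q.parts) (hl : Fin.last m ∉ C) :
    (univ.filter (fun b => glab (n := n) Q f b = .inl C)).Nonempty := by
  obtain ⟨x, -, hx⟩ := exists_inl_glab Q f hC hl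
  exact ⟨inl x, by simp [hx]⟩

lemma qlab_PG {Q : Finpartition (univ : Finset (Fin (m+1)))}
    {f : Fin n → Finset (Fin (m+1))} (hv : valid Q f) (w : Fin (m+1)) :
    qlab (PG Q f) w
      = if Fin.last m ∈ Q.part w then ∅
        else univ.filter (fun b => glab Q f b = .inl (Q.part w)) := by
  induction w using Fin.lastCases with
  | last =>
    rw [qlab_last, if_pos (Q.mem_part (mem_univ _))]
  | cast x =>
    by_cases hl : Fin.last m ∈ Q.part x.castSucc
    · rw [if_pos hl, qlab_castSucc]
      have hglab : glab (n := n) Q f (inl x) = .inr (inl x) := by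
        simp only [glab, Sum.elim_inl]
        rw [if_pos hl]
      rw [PG_part_of_inr hglab]
      have : ¬ mixedB m n ({inl x} : Finset (Fin m ⊕ Fin n)) := by
        rw [mixedB_iff]
        rintro ⟨-, y, hy⟩
        simp at hy
      rw [if_neg this]
    · rw [if_neg hl, qlab_castSucc]
      have hglab : glab (n := n) Q f (inl x) = .inl (Q.part x.castSucc) := by
        simp only [glab, Sum.elim_inl]
        rw [if_neg hl]
      have hpart : (PG Q f).part (inl x)
          = univ.filter (fun b => glab Q f b = .inl (Q.part x.castSucc)) := by
        rw [PG_part_eq, hglab]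
      have hmix : mixedB m n ((PG Q f).part (inl x)) := by
        obtain ⟨⟨x₁, hx₁⟩, ⟨y₁, hy₁⟩⟩ := fiber_inl_mixed hv (Q.part_mem.2 (mem_univ _)) hl
        rw [mixedB_iff]
        constructor
        · exact ⟨x₁, by rw [hpart]; simp [hx₁]⟩
        · exact ⟨y₁, by rw [hpart]; simp [hy₁]⟩
      rw [if_pos hmix, hpart]

lemma qlab_PG_eq_empty_iff {Q : Finpartition (univ : Finset (Fin (m+1)))}
    {f : Fin n → Finset (Fin (m+1))} (hv : valid Q f) (w : Fin (m+1)) :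
    qlab (PG Q f) w = ∅ ↔ Fin.last m ∈ Q.part w := by
  rw [qlab_PG hv]
  by_cases hl : Fin.last m ∈ Q.part w
  · simp [hl]
  · rw [if_neg hl]
    simp only [hl, iff_false]
    exact Finset.nonempty_iff_ne_empty.mp (fiber_inl_nonempty (Q.part_mem.2 (mem_univ _)) hl)

lemma QF_PG {Q : Finpartition (univ : Finset (Fin (m+1)))}
    {f : Fin n → Finset (Fin (m+1))} (hv : valid Q f) :
    QF (PG Q f) = Q := by
  apply finpartition_eq_of_part_eq
  intro w
  rw [QF_part_eq, part_eq_filter Q w]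
  apply Finset.filter_congr
  intro b _
  constructor
  · intro h
    by_cases hlb : Fin.last m ∈ Q.part b <;> by_cases hlw : Fin.last m ∈ Q.part w
    · exact ((mem_part_last_iff Q b).mp hlb).symm.trans ((mem_part_last_iff Q w).mp hlw)
    · exfalso
      rw [qlab_PG hv, qlab_PG hv, if_pos hlb, if_neg hlw] at h
      exact Finset.nonempty_iff_ne_empty.mp
        (fiber_inl_nonempty (Q.part_mem.2 (mem_univ _)) hlw) h.symm
    · exfalso
      rw [qlab_PG hv, qlab_PG hv, if_neg hlb, if_pos hlw] at h
      exact Finset.nonempty_iff_ne_empty.mp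
        (fiber_inl_nonempty (Q.part_mem.2 (mem_univ _)) hlb) h
    · rw [qlab_PG hv, qlab_PG hv, if_neg hlb, if_neg hlw] at h
      obtain ⟨x, -, hx⟩ := exists_inl_glab Q f (Q.part_mem.2 (mem_univ b)) hlb
      have hxin : inl x ∈ univ.filter
          (fun b' => glab (n := n) Q f b' = .inl (Q.part b)) := by simp [hx]
      rw [h] at hxin
      simp only [mem_filter, mem_univ, true_and] at hxin
      exact Sum.inl.inj (hx.symm.trans hxin)
  · intro h
    rw [qlab_PG hv, qlab_PG hv, h]

lemma fF_PG {Q : Finpartition (univ : Finset (Fin (m+1)))}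
    {f : Fin n → Finset (Fin (m+1))} (hv : valid Q f) :
    fF (PG Q f) = f := by
  funext v
  by_cases hl : Fin.last m ∈ f v
  · have hfv : Q.part (Fin.last m) = f v := Q.part_eq_of_mem (hv.1 v) hl
    have hglab : glab (n := n) Q f (inr v) = .inr (inr v) := by
      simp only [glab, Sum.elim_inr]
      rw [if_pos hl]
    have hnm : ¬ mixedB m n ((PG Q f).part (inr v)) := by
      rw [PG_part_of_inr hglab, mixedB_iff]
      rintro ⟨⟨x, hx⟩, -⟩
      simp at hx
    have hvlab : vlab (PG Q f) v = ∅ := by rw [vlab, if_neg hnm]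
    rw [fF, hvlab, ← hfv]
    ext w
    simp only [mem_filter, mem_univ, true_and]
    rw [qlab_PG_eq_empty_iff hv, mem_part_last_iff]
    constructor
    · intro h2
      rw [h2]
      exact Q.mem_part (mem_univ _)
    · intro h2
      exact (Q.part_eq_of_mem (Q.part_mem.2 (mem_univ _)) h2).symm
  · have hglab : glab (n := n) Q f (inr v) = .inl (f v) := by
      simp only [glab, Sum.elim_inr]
      rw [if_neg hl]
    have hpart : (PG Q f).part (inr v)
        = univ.filter (fun b => glab Q f b = .inl (f v)) := by
      rw [PG_part_eq, hglab]
    have hmix : mixedB m n ((PG Q f).part (inr v)) := by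
      obtain ⟨⟨x₁, hx₁⟩, ⟨y₁, hy₁⟩⟩ := fiber_inl_mixed hv (hv.1 v) hl
      rw [mixedB_iff]
      exact ⟨⟨x₁, by rw [hpart]; simp [hx₁]⟩, ⟨y₁, by rw [hpart]; simp [hy₁]⟩⟩
    have hvlab : vlab (PG Q f) v = univ.filter (fun b => glab Q f b = .inl (f v)) := by
      rw [vlab, if_pos hmix, hpart]
    rw [fF, hvlab]
    ext w
    simp only [mem_filter, mem_univ, true_and]
    constructor
    · intro h2
      have hne : qlab (PG Q f) w ≠ ∅ := by
        rw [h2]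
        exact Finset.nonempty_iff_ne_empty.mp (fiber_inl_nonempty (hv.1 v) hl)
      have hlw : Fin.last m ∉ Q.part w := fun hmem =>
        hne ((qlab_PG_eq_empty_iff hv w).mpr hmem)
      rw [qlab_PG hv, if_neg hlw] at h2
      obtain ⟨x, -, hx⟩ := exists_inl_glab Q f (Q.part_mem.2 (mem_univ w)) hlw
      have hxin : inl x ∈ univ.filter
          (fun b' => glab (n := n) Q f b' = .inl (Q.part w)) := by simp [hx]
      rw [h2] at hxin
      simp only [mem_filter, mem_univ, true_and] at hxin
      have : Q.part w = f v := Sum.inl.inj (hx.symm.trans hxin)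
      rw [← this]
      exact Q.mem_part (mem_univ _)
    · intro h2
      have hqw : Q.part w = f v := Q.part_eq_of_mem (hv.1 v) h2
      have hlw : Fin.last m ∉ Q.part w := by rw [hqw]; exact hl
      rw [qlab_PG hv, if_neg hlw, hqw]

end RoundTrip2

section Count
variable (m n : ℕ)

noncomputable def bigEquiv :
    {P : Finpartition (univ : Finset (Fin m ⊕ Fin n)) //
      ∀ B ∈ P.parts, ((completeBipartiteGraph (Fin m) (Fin n)).induce
        (↑B : Set (Fin m ⊕ Fin n))).Connected}
    ≃ Σ Q : Finpartition (univ : Finset (Fin (m+1))),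
        {f : Fin n → Finset (Fin (m+1)) // valid Q f} where
  toFun P := ⟨QF P.1, fF P.1, valid_QF_fF P.1⟩
  invFun Qf := ⟨PG Qf.1 Qf.2.1, PG_parts_conn Qf.2.2⟩
  left_inv P := Subtype.ext (PG_QF_fF P.2)
  right_inv := by
    rintro ⟨Q, f, hf⟩
    refine Sigma.ext (QF_PG hf) ?_
    refine (Subtype.heq_iff_coe_eq ?_).mpr (fF_PG hf)
    intro g
    show valid (QF (PG Q f)) g ↔ valid Q g
    rw [QF_PG hf]

variable {m n}

lemma card_valid (Q : Finpartition (univ : Finset (Fin (m+1)))) :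
    Nat.card {f : Fin n → Finset (Fin (m+1)) // valid Q f} = tcount n Q.parts.card := by
  classical
  have hk : 0 < Q.parts.card := by
    obtain ⟨t, ht, -⟩ := Q.exists_mem (mem_univ (Fin.last m))
    exact Finset.card_pos.mpr ⟨t, ht⟩
  set star : {C // C ∈ Q.parts} := ⟨Q.part (Fin.last m), Q.part_mem.2 (mem_univ _)⟩ with hstar
  set e₀ : {C // C ∈ Q.parts} ≃ Fin Q.parts.card := Q.parts.equivFin with he₀
  set e : {C // C ∈ Q.parts} ≃ Fin Q.parts.card :=
    e₀.trans (Equiv.swap (e₀ star) ⟨0, hk⟩) with he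
  have key : ∀ (C : Finset (Fin (m+1))) (hC : C ∈ Q.parts),
      (e ⟨C, hC⟩ = ⟨0, hk⟩ ↔ Fin.last m ∈ C) := by
    intro C hC
    have h1 : e ⟨C, hC⟩ = ⟨0, hk⟩ ↔ (⟨C, hC⟩ : {C // C ∈ Q.parts}) = star := by
      rw [he]
      simp only [Equiv.trans_apply]
      constructor
      · intro h
        have h2 : Equiv.swap (e₀ star) ⟨0, hk⟩ (e₀ ⟨C, hC⟩)
            = Equiv.swap (e₀ star) ⟨0, hk⟩ (e₀ star) := by
          rw [h, Equiv.swap_apply_left]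
        exact e₀.injective ((Equiv.swap _ _).injective h2)
      · intro h
        rw [h, Equiv.swap_apply_left]
    rw [h1]
    constructor
    · intro h
      have : C = Q.part (Fin.last m) := congrArg Subtype.val h
      rw [this]
      exact Q.mem_part (mem_univ _)
    · intro h
      exact Subtype.ext (Q.part_eq_of_mem hC h).symm
  have E : {f : Fin n → Finset (Fin (m+1)) // valid Q f}
      ≃ {g : Fin n → Fin Q.parts.card //
          ∀ j : Fin Q.parts.card, (j : ℕ) ≠ 0 → ∃ v, g v = j} := by
    refine ⟨fun f => ⟨fun v => e ⟨f.1 v, f.2.1 v⟩, ?_⟩,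
      fun g => ⟨fun v => (e.symm (g.1 v)).1, ⟨fun v => (e.symm (g.1 v)).2, ?_⟩⟩, ?_, ?_⟩
    · intro j hj
      set C := e.symm j with hC
      have hlC : Fin.last m ∉ C.1 := by
        intro hmem
        have : e ⟨C.1, C.2⟩ = ⟨0, hk⟩ := (key C.1 C.2).mpr hmem
        rw [Subtype.eta, hC, Equiv.apply_symm_apply] at this
        exact hj (by rw [this])
      obtain ⟨v, hv⟩ := f.2.2 C.1 C.2 hlC
      refine ⟨v, ?_⟩
      dsimp only
      have : (⟨f.1 v, f.2.1 v⟩ : {C // C ∈ Q.parts}) = C := Subtype.ext hv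
      rw [this, hC, Equiv.apply_symm_apply]
    · intro C hC hlC
      have hne : (e ⟨C, hC⟩ : ℕ) ≠ 0 := by
        intro h
        exact hlC ((key C hC).mp (Fin.ext h))
      obtain ⟨v, hv⟩ := g.2 (e ⟨C, hC⟩) hne
      refine ⟨v, ?_⟩
      dsimp only
      rw [hv, Equiv.symm_apply_apply]
    · intro f
      apply Subtype.ext
      funext v
      simp only [Equiv.symm_apply_apply]
    · intro g
      apply Subtype.ext
      funext v
      simp only
      have : (⟨(e.symm (g.1 v)).1, (e.symm (g.1 v)).2⟩ : {C // C ∈ Q.parts})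
          = e.symm (g.1 v) := Subtype.ext rfl
      rw [this, Equiv.apply_symm_apply]
  rw [tcount, Nat.card_congr E]

instance valid.dec (Q : Finpartition (univ : Finset (Fin (m+1))))
    (f : Fin n → Finset (Fin (m+1))) : Decidable (valid Q f) :=
  decidable_of_iff ((∀ v, f v ∈ Q.parts) ∧ ∀ C ∈ Q.parts, Fin.last m ∉ C → ∃ v, f v = C)
    Iff.rfl

lemma count_main :
    Nat.card {P : Finpartition (univ : Finset (Fin m ⊕ Fin n)) //
      ∀ B ∈ P.parts, ((completeBipartiteGraph (Fin m) (Fin n)).induce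
        (↑B : Set (Fin m ⊕ Fin n))).Connected}
    = ∑ k ∈ Icc 1 (m+1), stirling (m+1) k * tcount n k := by
  classical
  rw [Nat.card_congr (bigEquiv m n), Nat.card_eq_fintype_card, Fintype.card_sigma]
  have step1 : ∀ Q : Finpartition (univ : Finset (Fin (m+1))),
      Fintype.card {f : Fin n → Finset (Fin (m+1)) // valid Q f} = tcount n Q.parts.card := by
    intro Q
    rw [← Nat.card_eq_fintype_card, card_valid]
  rw [Fintype.sum_congr _ _ step1]
  have hmaps : ∀ Q : Finpartition (univ : Finset (Fin (m+1))), Q ∈ univ →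
      Q.parts.card ∈ Icc 1 (m+1) := by
    intro Q _
    rw [mem_Icc]
    constructor
    · obtain ⟨t, ht, -⟩ := Q.exists_mem (mem_univ (Fin.last m))
      exact Finset.card_pos.mpr ⟨t, ht⟩
    · have := Q.card_parts_le_card
      simpa using this
  rw [← Finset.sum_fiberwise_of_maps_to hmaps (fun Q => tcount n Q.parts.card)]
  apply Finset.sum_congr rfl
  intro k hk
  have : ∀ Q ∈ univ.filter
      (fun Q : Finpartition (univ : Finset (Fin (m+1))) => Q.parts.card = k),
      tcount n Q.parts.card = tcount n k := by
    intro Q hQ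
    rw [mem_filter] at hQ
    rw [hQ.2]
  rw [Finset.sum_congr rfl this, Finset.sum_const, smul_eq_mul]
  congr 1
  rw [stirling, Nat.card_eq_fintype_card, Fintype.card_subtype]

end Count

/-- **Knopfmacher–Mays formula with explicit coefficients.**
`C(K_{m,n}) = ∑_{i=1}^{m+1} a_{m,i} · iⁿ` where
`a_{m,i} = ∑_{k=1}^{m+1} (−1)^{k−i} · C(k−1, i−1) · S(m+1, k)`. -/
theorem compCount_completeBipartiteGraph_eq_sum_stirling (m n : ℕ) :
    (compCount (completeBipartiteGraph (Fin m) (Fin n)) : ℤ) =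
      ∑ i ∈ Finset.Icc 1 (m + 1),
        (∑ k ∈ Finset.Icc 1 (m + 1),
          (-1 : ℤ) ^ (k - i) * ((k - 1).choose (i - 1) : ℤ) * (stirling (m + 1) k : ℤ)) *
          (i : ℤ) ^ n := by
  have h0 : compCount (completeBipartiteGraph (Fin m) (Fin n))
      = ∑ k ∈ Icc 1 (m+1), stirling (m+1) k * tcount n k := by
    unfold compCount
    exact count_main
  rw [h0]
  push_cast
  have hexp : ∀ k ∈ Icc 1 (m+1), (stirling (m+1) k : ℤ) * (tcount n k : ℤ)
      = ∑ i ∈ Icc 1 (m+1),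
          (stirling (m+1) k : ℤ) *
            ((-1:ℤ)^(k-i) * ((k-1).choose (i-1) : ℤ) * (i:ℤ)^n) := by
    intro k hk
    rw [mem_Icc] at hk
    have hk1 : (k - 1) + 1 = k := by omega
    have ht : (tcount n k : ℤ)
        = ∑ i ∈ Icc 1 k, (-1:ℤ)^(k-i) * ((k-1).choose (i-1) : ℤ) * (i:ℤ)^n := by
      have hL := L3 n (k-1)
      rw [hk1] at hL
      rw [hL, show Icc 1 k = Ico 1 (k+1) from (Finset.Ico_add_one_right_eq_Icc 1 k).symm,
        Finset.sum_Ico_eq_sum_range]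
      have : k + 1 - 1 = k := by omega
      rw [this]
      apply Finset.sum_congr rfl
      intro i _
      have e1 : k - (1 + i) = k - 1 - i := by omega
      have e2 : 1 + i - 1 = i := by omega
      rw [e1, e2]
      have e3 : ((1 + i : ℕ) : ℤ) = (i : ℤ) + 1 := by push_cast; ring
      rw [e3]
    have hext : ∑ i ∈ Icc 1 k, (-1:ℤ)^(k-i) * ((k-1).choose (i-1) : ℤ) * (i:ℤ)^n
        = ∑ i ∈ Icc 1 (m+1), (-1:ℤ)^(k-i) * ((k-1).choose (i-1) : ℤ) * (i:ℤ)^n := by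
      apply Finset.sum_subset
      · intro i hi
        rw [mem_Icc] at hi ⊢
        omega
      · intro i hi hni
        rw [mem_Icc] at hi hni
        have : k - 1 < i - 1 := by omega
        rw [Nat.choose_eq_zero_of_lt this]
        simp
    rw [ht, hext, Finset.mul_sum]
  rw [Finset.sum_congr rfl hexp, Finset.sum_comm]
  apply Finset.sum_congr rfl
  intro i _
  rw [Finset.sum_mul]
  apply Finset.sum_congr rfl
  intro k _
  ring
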